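/- Let (λ_j)_{j≥1} be a nondecreasing sequence of positive reals, α ∈ (0,1), N ≥ 1 with λ_{N+1} − λ_N ≥ 1, and k > 0 with λ_N > 2k. Set γ = (λ_{N+1}^{1+α} + λ_N^{1+α})/2. Then for every v ∈ ℓ² with Σ_j λ_j^{1+α} v_j² < ∞, writing p = P_N v, one has: γ·‖p‖² − ‖A^{(1+α)/2} p‖² ≥ ((1+α)·k/2)·λ_N^α·‖P_{k,N} v‖² + (λ_N^α/2)·‖R_{k,N} p‖². -/

import Mathlib

noncomputable section

/-- `Plow N v` keeps the entries with index `j ≤ N` (the projector `P_N`). -/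
def Plow (N : ℕ+) (v : ℕ+ → ℝ) : ℕ+ → ℝ := fun j => if j ≤ N then v j else 0

/-- `Qhigh N v` keeps the entries with index `j > N` (the projector `Q_N`). -/
def Qhigh (N : ℕ+) (v : ℕ+ → ℝ) : ℕ+ → ℝ := fun j => if j ≤ N then 0 else v j

/-- `PkOp lam k N v` keeps exactly the entries with `λ_j < λ_N − k`. -/
def PkOp (lam : ℕ+ → ℝ) (k : ℝ) (N : ℕ+) (v : ℕ+ → ℝ) : ℕ+ → ℝ :=
  fun j => if lam j < lam N - k then v j else 0

/-- `RkOp lam k N v` keeps exactly the entries with `λ_N − k ≤ λ_j ≤ λ_N + k`. -/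
def RkOp (lam : ℕ+ → ℝ) (k : ℝ) (N : ℕ+) (v : ℕ+ → ℝ) : ℕ+ → ℝ :=
  fun j => if lam N - k ≤ lam j ∧ lam j ≤ lam N + k then v j else 0

/-- `QkOp lam k N v` keeps exactly the entries with `λ_j > λ_N + k`. -/
def QkOp (lam : ℕ+ → ℝ) (k : ℝ) (N : ℕ+) (v : ℕ+ → ℝ) : ℕ+ → ℝ :=
  fun j => if lam N + k < lam j then v j else 0

/-- Squared `ℓ²` norm. -/
def nsq (v : ℕ+ → ℝ) : ℝ := ∑' j, (v j) ^ 2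

/-- Squared norm `‖A^s v‖² = Σ_j λ_j^{2s} v_j²` of the diagonal operator power. -/
def asq (lam : ℕ+ → ℝ) (s : ℝ) (v : ℕ+ → ℝ) : ℝ := ∑' j, lam j ^ (2 * s) * (v j) ^ 2

/-- Bernoulli-type: `a^(1+α) + (1+α) a^α (b-a) ≤ b^(1+α)` for `0 < a ≤ b`, `0 ≤ α`. -/
lemma bern_aux {a b α : ℝ} (ha : 0 < a) (hab : a ≤ b) (hα : 0 ≤ α) :
    a ^ (1 + α) + (1 + α) * a ^ α * (b - a) ≤ b ^ (1 + α) := by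
  have hb : 0 < b := ha.trans_le hab
  have hs : (0:ℝ) ≤ (b - a) / a := div_nonneg (by linarith) ha.le
  have hbern := one_add_mul_self_le_rpow_one_add (s := (b - a)/a)
    (by linarith) (p := 1 + α) (by linarith)
  have h1 : 1 + (b - a)/a = b / a := by field_simp; ring
  rw [h1, Real.div_rpow hb.le ha.le] at hbern
  have hap : (0:ℝ) < a ^ (1 + α) := Real.rpow_pos_of_pos ha _
  have hmul := mul_le_mul_of_nonneg_left hbern hap.le
  have h2 : a ^ (1 + α) * (b ^ (1 + α) / a ^ (1 + α)) = b ^ (1 + α) := by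
    field_simp
  have h3 : a ^ (1 + α) = a * a ^ α := by
    rw [Real.rpow_add ha, Real.rpow_one]
  rw [h2] at hmul
  calc a ^ (1 + α) + (1 + α) * a ^ α * (b - a)
      = a ^ (1 + α) * (1 + (1 + α) * ((b - a)/a)) := by
        rw [h3]; field_simp
    _ ≤ b ^ (1 + α) := hmul

set_option maxHeartbeats 1000000 in
/-- Lemma 6.3 of the paper: lower bound for the term `I_p`. -/
theorem Ip_estimate
    (lam : ℕ+ → ℝ) (hmono : Monotone lam) (hpos : ∀ j, 0 < lam j)
    (α : ℝ) (hα0 : 0 < α) (hα1 : α < 1)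
    (N : ℕ+) (hgap : 1 ≤ lam (N + 1) - lam N)
    (k : ℝ) (hk : 0 < k) (hkN : 2 * k < lam N)
    (γ : ℝ) (hγ : γ = (lam (N + 1) ^ (1 + α) + lam N ^ (1 + α)) / 2)
    (v : ℕ+ → ℝ)
    (hv2 : Summable fun j => (v j) ^ 2)
    (hv : Summable fun j => lam j ^ (1 + α) * (v j) ^ 2) :
    ((1 + α) * k / 2) * lam N ^ α * nsq (PkOp lam k N v) +
        (lam N ^ α / 2) * nsq (RkOp lam k N (Plow N v)) ≤
      γ * nsq (Plow N v) - asq lam ((1 + α) / 2) (Plow N v) := by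
    classical
  set s : Finset ℕ+ := Finset.Iic N with hs
  have hout : ∀ j : ℕ+, j ∉ s → Plow N v j = 0 := by
    intro j hj; simp only [Finset.mem_Iic, hs] at hj; simp [Plow, hj]
  have hlamN : ∀ j : ℕ+, j ∉ s → lam N ≤ lam j := by
    intro j hj; simp only [Finset.mem_Iic, hs] at hj
    exact hmono (le_of_lt (lt_of_not_ge hj))
  -- rewrite tsums as finite sums
  have e1 : nsq (PkOp lam k N v) = ∑ j ∈ s, (PkOp lam k N v j) ^ 2 := by
    refine tsum_eq_sum ?_
    intro j hj
    have : ¬ lam j < lam N - k := by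
      have := hlamN j hj; linarith
    simp [PkOp, this]
  have e2 : nsq (RkOp lam k N (Plow N v)) = ∑ j ∈ s, (RkOp lam k N (Plow N v) j) ^ 2 := by
    refine tsum_eq_sum ?_
    intro j hj
    simp [RkOp, hout j hj]
  have e3 : nsq (Plow N v) = ∑ j ∈ s, (Plow N v j) ^ 2 := by
    refine tsum_eq_sum ?_
    intro j hj; simp [hout j hj]
  have e4 : asq lam ((1 + α) / 2) (Plow N v)
      = ∑ j ∈ s, lam j ^ (1 + α) * (Plow N v j) ^ 2 := by
    have h2 : 2 * ((1 + α) / 2) = 1 + α := by ring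
    unfold asq
    rw [h2]
    refine tsum_eq_sum ?_
    intro j hj; simp [hout j hj]
  rw [e1, e2, e3, e4, Finset.mul_sum, Finset.mul_sum, Finset.mul_sum,
    ← Finset.sum_sub_distrib, ← Finset.sum_add_distrib]
  apply Finset.sum_le_sum
  intro j hj
  simp only [Finset.mem_Iic, hs] at hj
  have hpj : Plow N v j = v j := by simp [Plow, hj]
  have hlamj : lam j ≤ lam N := hmono hj
  have hposj := hpos j
  have hposN := hpos N
  -- key: γ - lam N ^ (1+α) ≥ (1+α) * lam N ^ α / 2
  have hbN := bern_aux hposN (le_of_lt (by linarith : lam N < lam (N+1))) hα0.le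
  have hmonoj : lam j ^ (1 + α) ≤ lam N ^ (1 + α) :=
    Real.rpow_le_rpow hposj.le hlamj (by linarith)
  have hNα : (0:ℝ) < lam N ^ α := Real.rpow_pos_of_pos hposN _
  have hγN : (1 + α) * lam N ^ α / 2 ≤ γ - lam N ^ (1 + α) := by
    rw [hγ]
    nlinarith [mul_le_mul_of_nonneg_left hgap (by positivity : (0:ℝ) ≤ (1+α) * lam N ^ α)]
  by_cases hcase : lam j < lam N - k
  · -- PkOp active, RkOp zero
    have hR : RkOp lam k N (Plow N v) j = 0 := by
      simp [RkOp]; intro h; linarith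
    have hP : PkOp lam k N v j = v j := by simp [PkOp, hcase]
    rw [hP, hR, hpj]
    -- need c1 ≤ γ - lam j ^ (1+α)
    have hkpos : 0 < lam N - k := by linarith
    have hb2 := bern_aux hkpos (by linarith : lam N - k ≤ lam N) hα0.le
    have hmj : lam j ^ (1 + α) ≤ (lam N - k) ^ (1 + α) :=
      Real.rpow_le_rpow hposj.le hcase.le (by linarith)
    -- (lam N - k)^α ≥ lam N ^ α / 2
    have hhalf : lam N ^ α / 2 ≤ (lam N - k) ^ α := by
      have h1 : (lam N / 2) ^ α ≤ (lam N - k) ^ α :=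
        Real.rpow_le_rpow (by positivity) (by linarith) hα0.le
      have h2 : (lam N / 2) ^ α = lam N ^ α / 2 ^ α :=
        Real.div_rpow hposN.le (by norm_num : (0:ℝ) ≤ 2) α
      have h3 : (2:ℝ) ^ α ≤ 2 := by
        calc (2:ℝ) ^ α ≤ 2 ^ (1:ℝ) := Real.rpow_le_rpow_of_exponent_le (by norm_num) hα1.le
          _ = 2 := Real.rpow_one 2
      have h4 : (0:ℝ) < 2 ^ α := Real.rpow_pos_of_pos (by norm_num) _
      have h5 : lam N ^ α / 2 ≤ lam N ^ α / 2 ^ α :=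
        div_le_div_of_nonneg_left hNα.le h4 h3
      calc lam N ^ α / 2 ≤ lam N ^ α / 2 ^ α := h5
        _ = (lam N / 2) ^ α := h2.symm
        _ ≤ (lam N - k) ^ α := h1
    have hkey : (1 + α) * k / 2 * lam N ^ α ≤ γ - lam j ^ (1 + α) := by
      have hγgeN : lam N ^ (1 + α) ≤ γ := by
        have hp : (0:ℝ) < (1 + α) * lam N ^ α / 2 := by positivity
        linarith
      nlinarith [mul_le_mul_of_nonneg_left hhalf (by positivity : (0:ℝ) ≤ (1+α) * k)]
    have hmul := mul_le_mul_of_nonneg_right hkey (sq_nonneg (v j))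
    linarith [hmul]
  · -- RkOp active (since lam j ≤ lam N ≤ lam N + k), PkOp zero
    have hP : PkOp lam k N v j = 0 := by simp [PkOp, hcase]
    have hc1 : lam N - k ≤ lam j := not_lt.mp hcase
    have hc2 : lam j ≤ lam N + k := by linarith
    have hR : RkOp lam k N (Plow N v) j = v j := by
      simp [RkOp, hc1, hc2, hpj]
    rw [hP, hR, hpj]
    have hkey : lam N ^ α / 2 ≤ γ - lam j ^ (1 + α) := by
      linarith [mul_nonneg hα0.le hNα.le, hγN, hmonoj]
    have hmul := mul_le_mul_of_nonneg_right hkey (sq_nonneg (v j))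
    linarith [hmul]
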